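/- Let r ≥ 2 and let G be a graph of order n containing K_{r+1} with minimum degree δ(G) > (1 - 1/r - 1/r^4) n. Then G contains an edge that lies in more than n^(r-1)/r^(r+3) cliques of order r+1; that is, js_{r+1}(G) > n^(r-1)/r^(r+3). -/

import Mathlib

open Finset

open scoped Classical

/-- The p-spectral radius of a graph `G`:
`λ^(p)(G) = max { 2 ∑_{{i,j}∈E(G)} x_i x_j : ∑ |x_i|^p = 1 }`,
where the quadratic form is written as `∑ i ∑ j, if G.Adj i j then x i * x j else 0`. -/

noncomputable def pSpec {V : Type*} [Fintype V] (G : SimpleGraph V) (p : ℝ) : ℝ :=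
  sSup {y : ℝ | ∃ x : V → ℝ, (∑ i, |x i| ^ p) = 1 ∧
    y = ∑ i, ∑ j, if G.Adj i j then x i * x j else 0}

set_option linter.unusedSectionVars false
set_option linter.unusedTactic false
set_option linter.unreachableTactic false
set_option maxHeartbeats 3200000

namespace BNJ

variable {V : Type*} [Fintype V] [DecidableEq V]

/-- closed non-neighbourhood of `w` (contains `w` itself). -/
noncomputable def mset (G : SimpleGraph V) (w : V) : Finset V :=
  univ.filter (fun x => ¬ G.Adj w x)

/-- cliques of size `k` inside `A` containing `u` and `v`. -/
noncomputable def cthru (G : SimpleGraph V) (A : Finset V) (u v : V) (k : ℕ) :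
    Finset (Finset V) :=
  A.powerset.filter (fun s => G.IsNClique k s ∧ u ∈ s ∧ v ∈ s)

/-- common-neighbourhood extension set. -/
noncomputable def extset (G : SimpleGraph V) (T : Finset V) : Finset V :=
  univ.filter (fun y => ∀ w ∈ T, G.Adj w y)

lemma mem_mset {G : SimpleGraph V} {w x : V} : x ∈ mset G w ↔ ¬ G.Adj w x := by
  simp [mset]

lemma mem_cthru {G : SimpleGraph V} {A : Finset V} {u v : V} {k : ℕ} {s : Finset V} :
    s ∈ cthru G A u v k ↔ s ⊆ A ∧ G.IsNClique k s ∧ u ∈ s ∧ v ∈ s := by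
  simp [cthru, and_assoc]

lemma sdiff_mset (G : SimpleGraph V) (A : Finset V) (x : V) :
    A \ mset G x = A.filter (fun y => G.Adj x y) := by
  ext y
  simp [mset]

/-- the key counting lemma: summing, over a set `X` of vertices, the number of
`s`-cliques through `u v` inside `A ∩ N(x)`, is at most `(s-1)` times the number of
`(s+1)`-cliques through `u v` inside `A`. -/
lemma count_le (G : SimpleGraph V) (A : Finset V) {u v : V} (huv : u ≠ v) (s : ℕ)
    (X : Finset V) (hXA : X ⊆ A) :
    ∑ x ∈ X, (cthru G (A.filter (fun y => G.Adj x y)) u v s).card ≤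
      (s - 1) * (cthru G A u v (s + 1)).card := by
  classical
  rw [← Finset.card_sigma]
  set Sig := X.sigma (fun x => cthru G (A.filter (fun y => G.Adj x y)) u v s) with hSigdef
  have hmaps : ∀ q ∈ Sig, insert q.1 q.2 ∈ cthru G A u v (s + 1) := by
    rintro ⟨x, P⟩ hq
    rw [hSigdef, Finset.mem_sigma] at hq
    obtain ⟨hx, hP⟩ := hq
    rw [mem_cthru] at hP ⊢
    obtain ⟨hPA, hPc, hu, hv⟩ := hP
    have hadj : ∀ y ∈ P, G.Adj x y := fun y hy => (Finset.mem_filter.1 (hPA hy)).2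
    refine ⟨?_, hPc.insert hadj, Finset.mem_insert_of_mem hu, Finset.mem_insert_of_mem hv⟩
    intro z hz
    rcases Finset.mem_insert.1 hz with rfl | hz
    · exact hXA hx
    · exact (Finset.mem_filter.1 (hPA hz)).1
  rw [Finset.card_eq_sum_card_fiberwise hmaps]
  have hfib : ∀ T ∈ cthru G A u v (s + 1),
      (Sig.filter (fun q => insert q.1 q.2 = T)).card ≤ s - 1 := by
    intro T hT
    rw [mem_cthru] at hT
    obtain ⟨hTA, hTc, huT, hvT⟩ := hT
    have hstep : (Sig.filter (fun q => insert q.1 q.2 = T)).card ≤ ((T.erase u).erase v).card := by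
      apply Finset.card_le_card_of_injOn (fun q => q.1)
      · rintro ⟨x, P⟩ hq
        rw [Finset.mem_coe, Finset.mem_filter] at hq
        obtain ⟨hq, hFq⟩ := hq
        rw [hSigdef, Finset.mem_sigma] at hq
        obtain ⟨hx, hP⟩ := hq
        rw [mem_cthru] at hP
        obtain ⟨hPA, hPc, hu, hv⟩ := hP
        have hadjP : ∀ y ∈ P, G.Adj x y := fun y hy => (Finset.mem_filter.1 (hPA hy)).2
        have hxT : x ∈ T := by rw [← hFq]; exact Finset.mem_insert_self _ _
        have hxu : (x : V) ≠ u := by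
          rintro rfl
          exact G.irrefl (hadjP _ hu)
        have hxv : (x : V) ≠ v := by
          rintro rfl
          exact G.irrefl (hadjP _ hv)
        exact Finset.mem_erase.2 ⟨hxv, Finset.mem_erase.2 ⟨hxu, hxT⟩⟩
      · rintro ⟨x, P⟩ hq ⟨x', P'⟩ hq' (h : x = x')
        subst h
        rw [Finset.mem_coe, Finset.mem_filter] at hq hq'
        obtain ⟨hq, hFq⟩ := hq
        obtain ⟨hq', hFq'⟩ := hq'
        rw [hSigdef, Finset.mem_sigma] at hq hq'
        have hxP : x ∉ P := by
          intro hxP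
          exact G.irrefl (Finset.mem_filter.1 (hq.2 |> (fun h => (mem_cthru.1 h).1) |> (fun h => h hxP))).2
        have hxP' : x ∉ P' := by
          intro hxP
          exact G.irrefl (Finset.mem_filter.1 (hq'.2 |> (fun h => (mem_cthru.1 h).1) |> (fun h => h hxP))).2
        have : P = P' := by
          have h1 : (insert x P).erase x = P := Finset.erase_insert hxP
          have h2 : (insert x P').erase x = P' := Finset.erase_insert hxP'
          rw [← h1, ← h2, hFq, hFq']
        simp [this]
    refine hstep.trans ?_
    have hvT' : v ∈ T.erase u := Finset.mem_erase.2 ⟨huv.symm, hvT⟩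
    rw [Finset.card_erase_of_mem hvT', Finset.card_erase_of_mem huT, hTc.2]
    omega
  calc ∑ T ∈ cthru G A u v (s + 1), (Sig.filter (fun q => insert q.1 q.2 = T)).card
      ≤ ∑ _T ∈ cthru G A u v (s + 1), (s - 1) := Finset.sum_le_sum hfib
    _ = (cthru G A u v (s + 1)).card * (s - 1) := by rw [Finset.sum_const, smul_eq_mul]
    _ = (s - 1) * (cthru G A u v (s + 1)).card := Nat.mul_comm _ _


/-- ext-counting: summing extension counts over `k`-cliques through `u v` bounds
`(k-1)` times the `(k+1)`-clique count. -/
lemma ext_count (G : SimpleGraph V) {u v : V} (huv : u ≠ v) (k : ℕ) (hk : 2 ≤ k) :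
    ∑ T ∈ cthru G univ u v k, (extset G T).card ≤
      (k - 1) * (cthru G univ u v (k + 1)).card := by
  classical
  rw [← Finset.card_sigma]
  set Sig := (cthru G univ u v k).sigma (fun T => extset G T) with hSigdef
  have hadj : ∀ q ∈ Sig, ∀ w ∈ q.1, G.Adj w q.2 := by
    rintro ⟨T, y⟩ hq
    rw [hSigdef, Finset.mem_sigma] at hq
    exact fun w hw => (Finset.mem_filter.1 hq.2).2 w hw
  have hynotmem : ∀ q ∈ Sig, q.2 ∉ q.1 := by
    rintro ⟨T, y⟩ hq hy
    exact G.irrefl (hadj ⟨T, y⟩ hq y hy)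
  have hmaps : ∀ q ∈ Sig, insert q.2 q.1 ∈ cthru G univ u v (k + 1) := by
    rintro ⟨T, y⟩ hq
    have hq' := hq
    rw [hSigdef, Finset.mem_sigma] at hq'
    obtain ⟨hT, _⟩ := hq'
    rw [mem_cthru] at hT ⊢
    obtain ⟨_, hTc, hu, hv⟩ := hT
    exact ⟨Finset.subset_univ _, hTc.insert (fun b hb => G.adj_symm (hadj ⟨T, y⟩ hq b hb)),
      Finset.mem_insert_of_mem hu, Finset.mem_insert_of_mem hv⟩
  rw [Finset.card_eq_sum_card_fiberwise hmaps]
  have hfib : ∀ T' ∈ cthru G univ u v (k + 1),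
      (Sig.filter (fun q => insert q.2 q.1 = T')).card ≤ k - 1 := by
    intro T' hT'
    rw [mem_cthru] at hT'
    obtain ⟨_, hTc', huT, hvT⟩ := hT'
    have hstep : (Sig.filter (fun q => insert q.2 q.1 = T')).card ≤
        ((T'.erase u).erase v).card := by
      apply Finset.card_le_card_of_injOn (fun q => q.2)
      · rintro ⟨T, y⟩ hq
        rw [Finset.mem_coe, Finset.mem_filter] at hq
        obtain ⟨hq, hFq⟩ := hq
        have hymem : y ∈ T' := by rw [← hFq]; exact Finset.mem_insert_self _ _
        have hqS := hq
        rw [hSigdef, Finset.mem_sigma] at hqS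
        obtain ⟨hT, _⟩ := hqS
        rw [mem_cthru] at hT
        obtain ⟨_, _, hu, hv⟩ := hT
        have hau : G.Adj u y := hadj ⟨T, y⟩ hq u hu
        have hav : G.Adj v y := hadj ⟨T, y⟩ hq v hv
        have hyu : (y : V) ≠ u := fun h => G.irrefl (h ▸ hau)
        have hyv : (y : V) ≠ v := fun h => G.irrefl (h ▸ hav)
        exact Finset.mem_erase.2 ⟨hyv, Finset.mem_erase.2 ⟨hyu, hymem⟩⟩
      · rintro ⟨T, y⟩ hq ⟨T', y'⟩ hq' (h : y = y')
        subst h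
        rw [Finset.mem_coe, Finset.mem_filter] at hq hq'
        obtain ⟨hq, hFq⟩ := hq
        obtain ⟨hq', hFq'⟩ := hq'
        have h1 : (insert y T).erase y = T := Finset.erase_insert (hynotmem ⟨T, y⟩ hq)
        have h2 : (insert y T').erase y = T' := Finset.erase_insert (hynotmem ⟨T', y⟩ hq')
        have : T = T' := by rw [← h1, ← h2, hFq, hFq']
        simp [this]
    refine hstep.trans ?_
    have hvT' : v ∈ T'.erase u := Finset.mem_erase.2 ⟨huv.symm, hvT⟩
    rw [Finset.card_erase_of_mem hvT', Finset.card_erase_of_mem huT, hTc'.2]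
    omega
  calc ∑ T' ∈ cthru G univ u v (k + 1), (Sig.filter (fun q => insert q.2 q.1 = T')).card
      ≤ ∑ _T ∈ cthru G univ u v (k + 1), (k - 1) := Finset.sum_le_sum hfib
    _ = (cthru G univ u v (k + 1)).card * (k - 1) := by rw [Finset.sum_const, smul_eq_mul]
    _ = (k - 1) * (cthru G univ u v (k + 1)).card := Nat.mul_comm _ _

/-- lower bound on extension count via (overlapping) union bound. -/
lemma extset_card (G : SimpleGraph V) {u v : V} (huv : u ≠ v) (T : Finset V)
    (hu : u ∈ T) (hv : v ∈ T) :
    Fintype.card V + (mset G u ∩ mset G v).card ≤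
      (extset G T).card + ((mset G u).card + (mset G v).card +
        ∑ w ∈ (T.erase u).erase v, (mset G w).card) := by
  classical
  have hsplit : (extset G T).card + (T.biUnion (fun w => mset G w)).card = Fintype.card V := by
    have : extset G T = univ \ (T.biUnion (fun w => mset G w)) := by
      ext y
      simp only [extset, Finset.mem_filter, Finset.mem_univ, true_and, Finset.mem_sdiff,
        Finset.mem_biUnion, mem_mset]
      constructor
      · rintro h ⟨w, hw, hnadj⟩; exact hnadj (h w hw)
      · intro h w hw
        by_contra hn
        exact h ⟨w, hw, hn⟩
    rw [this, Finset.card_sdiff_of_subset (Finset.subset_univ _), Finset.card_univ]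
    have := Finset.card_le_card (Finset.subset_univ (T.biUnion (fun w => mset G w)))
    rw [Finset.card_univ] at this
    omega
  have hbound : (T.biUnion (fun w => mset G w)).card + (mset G u ∩ mset G v).card ≤
      (mset G u).card + (mset G v).card + ∑ w ∈ (T.erase u).erase v, (mset G w).card := by
    have hsub : T.biUnion (fun w => mset G w) ⊆
        (mset G u ∪ mset G v) ∪ ((T.erase u).erase v).biUnion (fun w => mset G w) := by
      intro y hy
      rw [Finset.mem_biUnion] at hy
      obtain ⟨w, hw, hyw⟩ := hy
      by_cases h1 : w = u
      · subst h1; exact Finset.mem_union_left _ (Finset.mem_union_left _ hyw)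
      by_cases h2 : w = v
      · subst h2; exact Finset.mem_union_left _ (Finset.mem_union_right _ hyw)
      · exact Finset.mem_union_right _ (Finset.mem_biUnion.2
          ⟨w, Finset.mem_erase.2 ⟨h2, Finset.mem_erase.2 ⟨h1, hw⟩⟩, hyw⟩)
    have h1 : (T.biUnion (fun w => mset G w)).card ≤
        (mset G u ∪ mset G v).card + (((T.erase u).erase v).biUnion (fun w => mset G w)).card :=
      (Finset.card_le_card hsub).trans (Finset.card_union_le _ _)
    have h2 : (mset G u ∪ mset G v).card + (mset G u ∩ mset G v).card =
        (mset G u).card + (mset G v).card := Finset.card_union_add_card_inter _ _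
    have h3 : (((T.erase u).erase v).biUnion (fun w => mset G w)).card ≤
        ∑ w ∈ (T.erase u).erase v, (mset G w).card := Finset.card_biUnion_le
    omega
  omega


lemma offDiag_filter {α : Type*} [DecidableEq α] (s : Finset α) (f : α → Prop) [DecidablePred f] :
    (s.filter f).offDiag = s.offDiag.filter (fun p => f p.1 ∧ f p.2) := by
  classical
  ext ⟨a, b⟩
  simp only [Finset.mem_offDiag, Finset.mem_filter]
  tauto

/-- double counting the pairs of non-neighbours. -/
lemma mass_swap (G : SimpleGraph V) (A R : Finset V) :
    ∑ p ∈ R.offDiag, (A ∩ mset G p.1 ∩ mset G p.2).card =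
      ∑ x ∈ A, ((R.filter (fun w => x ∈ mset G w)).offDiag).card := by
  classical
  have h1 : ∀ p : V × V, (A ∩ mset G p.1 ∩ mset G p.2) =
      A.filter (fun x => x ∈ mset G p.1 ∧ x ∈ mset G p.2) := by
    intro p
    ext x
    simp only [Finset.mem_inter, Finset.mem_filter]
    tauto
  calc ∑ p ∈ R.offDiag, (A ∩ mset G p.1 ∩ mset G p.2).card
      = ∑ p ∈ R.offDiag, ∑ x ∈ A, (if x ∈ mset G p.1 ∧ x ∈ mset G p.2 then 1 else 0) := by
        refine Finset.sum_congr rfl (fun p _ => ?_)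
        rw [h1 p, Finset.card_filter]
    _ = ∑ x ∈ A, ∑ p ∈ R.offDiag, (if x ∈ mset G p.1 ∧ x ∈ mset G p.2 then 1 else 0) :=
        Finset.sum_comm
    _ = ∑ x ∈ A, ((R.filter (fun w => x ∈ mset G w)).offDiag).card := by
        refine Finset.sum_congr rfl (fun x _ => ?_)
        rw [offDiag_filter, Finset.card_filter]

/-- at least `2 * bad` pairs of misses. -/
lemma bad_le (G : SimpleGraph V) (A R : Finset V) :
    2 * (A.filter (fun x => ¬ ((R.filter (fun w => x ∈ mset G w)).card ≤ 1))).card ≤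
      ∑ p ∈ R.offDiag, (A ∩ mset G p.1 ∩ mset G p.2).card := by
  classical
  rw [mass_swap]
  calc 2 * (A.filter (fun x => ¬ ((R.filter (fun w => x ∈ mset G w)).card ≤ 1))).card
      = ∑ _x ∈ A.filter (fun x => ¬ ((R.filter (fun w => x ∈ mset G w)).card ≤ 1)), 2 := by
        rw [Finset.sum_const, smul_eq_mul, Nat.mul_comm]
    _ ≤ ∑ x ∈ A.filter (fun x => ¬ ((R.filter (fun w => x ∈ mset G w)).card ≤ 1)),
          ((R.filter (fun w => x ∈ mset G w)).offDiag).card := by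
        refine Finset.sum_le_sum (fun x hx => ?_)
        rw [Finset.mem_filter, not_le] at hx
        have ht : 2 ≤ (R.filter (fun w => x ∈ mset G w)).card := hx.2
        rw [Finset.offDiag_card]
        set t := (R.filter (fun w => x ∈ mset G w)).card
        have : 2 * t ≤ t * t := Nat.mul_le_mul_right t ht
        omega
    _ ≤ ∑ x ∈ A, ((R.filter (fun w => x ∈ mset G w)).offDiag).card :=
        Finset.sum_le_sum_of_subset (Finset.filter_subset _ _)

/-- swap of sums used in the main induction. -/
lemma swap_sum {β : Type*} (good : Finset β) (R : Finset V) (w : β → V) (f : β → V × V → ℝ) :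
    ∑ x ∈ good, ∑ p ∈ (R.erase (w x)).offDiag, f x p =
      ∑ p ∈ R.offDiag, ∑ x ∈ good.filter (fun x => p.1 ≠ w x ∧ p.2 ≠ w x), f x p := by
  classical
  have h1 : ∀ x, (R.erase (w x)).offDiag =
      R.offDiag.filter (fun p => p.1 ≠ w x ∧ p.2 ≠ w x) := by
    intro x
    rw [← Finset.filter_ne', offDiag_filter]
  calc ∑ x ∈ good, ∑ p ∈ (R.erase (w x)).offDiag, f x p
      = ∑ x ∈ good, ∑ p ∈ R.offDiag, (if p.1 ≠ w x ∧ p.2 ≠ w x then f x p else 0) := by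
        refine Finset.sum_congr rfl (fun x _ => ?_)
        rw [h1 x, Finset.sum_filter]
    _ = ∑ p ∈ R.offDiag, ∑ x ∈ good, (if p.1 ≠ w x ∧ p.2 ≠ w x then f x p else 0) :=
        Finset.sum_comm
    _ = ∑ p ∈ R.offDiag, ∑ x ∈ good.filter (fun x => p.1 ≠ w x ∧ p.2 ≠ w x), f x p := by
        refine Finset.sum_congr rfl (fun p _ => ?_)
        rw [Finset.sum_filter]

lemma prod_ratio_one (k : ℕ) :
    ∏ i ∈ Finset.range k, (((k - i : ℕ) : ℝ) / ((i + 1 : ℕ) : ℝ)) = 1 := by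
  rw [Finset.prod_div_distrib]
  have h1 : ∏ i ∈ Finset.range k, ((k - i : ℕ) : ℝ) =
      ∏ i ∈ Finset.range k, ((i + 1 : ℕ) : ℝ) := by
    rw [← Nat.cast_prod, ← Nat.cast_prod]
    congr 1
    have h := Finset.prod_range_reflect (fun i => i + 1) k
    rw [← h]
    refine Finset.prod_congr rfl (fun i hi => ?_)
    rw [Finset.mem_range] at hi
    omega
  rw [h1, div_self]
  have : ∀ i ∈ Finset.range k, (0:ℝ) < ((i + 1 : ℕ) : ℝ) := by
    intro i _
    positivity
  exact ne_of_gt (Finset.prod_pos this)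


lemma pair_mem_cthru (G : SimpleGraph V) {u v : V} (huv : G.Adj u v) :
    ({u, v} : Finset V) ∈ cthru G univ u v 2 := by
  rw [mem_cthru]
  refine ⟨Finset.subset_univ _, ⟨?_, ?_⟩, by simp, by simp⟩
  · intro a ha b hb hab
    simp only [Finset.coe_insert, Set.mem_insert_iff, Finset.coe_singleton,
      Set.mem_singleton_iff] at ha hb
    rcases ha with rfl | rfl <;> rcases hb with rfl | rfl
    · exact absurd rfl hab
    · exact huv
    · exact huv.symm
    · exact absurd rfl hab
  · rw [Finset.card_insert_of_notMem (by simp [huv.ne]), Finset.card_singleton]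

lemma chain (G : SimpleGraph V) {u v : V} (huv : G.Adj u v) (N b om : ℝ)
    (hN : (Fintype.card V : ℝ) = N)
    (hb : ∀ w : V, ((mset G w).card : ℝ) ≤ b)
    (hom : om ≤ ((mset G u ∩ mset G v).card : ℝ))
    (J : ℕ) (hpos : ∀ i : ℕ, i < J → 0 ≤ N - ((i : ℝ) + 2) * b + om) :
    ∀ j, j ≤ J → ∏ i ∈ Finset.range j, ((N - ((i : ℝ) + 2) * b + om) / ((i : ℝ) + 1)) ≤
      ((cthru G univ u v (j + 2)).card : ℝ) := by
  intro j
  induction j with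
  | zero =>
    intro _
    rw [Finset.prod_range_zero]
    have h1 : 1 ≤ (cthru G univ u v 2).card :=
      Finset.one_le_card.2 ⟨_, pair_mem_cthru G huv⟩
    exact_mod_cast h1
  | succ j ih =>
    intro hjJ
    have ihj := ih (by omega)
    have hE : (0:ℝ) ≤ N - ((j : ℝ) + 2) * b + om := hpos j (by omega)
    have hprodpos : (0:ℝ) ≤ ∏ i ∈ Finset.range j, ((N - ((i : ℝ) + 2) * b + om) / ((i : ℝ) + 1)) := by
      refine Finset.prod_nonneg (fun i hi => ?_)
      rw [Finset.mem_range] at hi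
      have := hpos i (by omega)
      positivity
    have hperT : ∀ T ∈ cthru G univ u v (j + 2),
        N - ((j : ℝ) + 2) * b + om ≤ ((extset G T).card : ℝ) := by
      intro T hT
      rw [mem_cthru] at hT
      obtain ⟨_, hTc, hu, hv⟩ := hT
      have hkey := extset_card G huv.ne T hu hv
      have hcard : ((T.erase u).erase v).card = j := by
        have hvT' : v ∈ T.erase u := Finset.mem_erase.2 ⟨huv.ne.symm, hv⟩
        rw [Finset.card_erase_of_mem hvT', Finset.card_erase_of_mem hu, hTc.2]
        omega
      have hsum : (∑ w ∈ (T.erase u).erase v, ((mset G w).card : ℝ)) ≤ (j : ℝ) * b := by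
        calc (∑ w ∈ (T.erase u).erase v, ((mset G w).card : ℝ))
            ≤ ∑ _w ∈ (T.erase u).erase v, b := Finset.sum_le_sum (fun w _ => hb w)
          _ = (j : ℝ) * b := by rw [Finset.sum_const, hcard, nsmul_eq_mul]
      have hcast : (Fintype.card V : ℝ) + ((mset G u ∩ mset G v).card : ℝ) ≤
          ((extset G T).card : ℝ) + (((mset G u).card : ℝ) + ((mset G v).card : ℝ) +
            ∑ w ∈ (T.erase u).erase v, ((mset G w).card : ℝ)) := by
        exact_mod_cast hkey
      have h1 := hb u
      have h2 := hb v
      rw [hN] at hcast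
      nlinarith [hsum, hom]
    have hsumext : ((cthru G univ u v (j + 2)).card : ℝ) * (N - ((j : ℝ) + 2) * b + om) ≤
        ∑ T ∈ cthru G univ u v (j + 2), ((extset G T).card : ℝ) := by
      calc ((cthru G univ u v (j + 2)).card : ℝ) * (N - ((j : ℝ) + 2) * b + om)
          = ∑ _T ∈ cthru G univ u v (j + 2), (N - ((j : ℝ) + 2) * b + om) := by
            rw [Finset.sum_const, nsmul_eq_mul]
        _ ≤ ∑ T ∈ cthru G univ u v (j + 2), ((extset G T).card : ℝ) :=
            Finset.sum_le_sum hperT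
    have hcount : (∑ T ∈ cthru G univ u v (j + 2), ((extset G T).card : ℝ)) ≤
        ((j : ℝ) + 1) * ((cthru G univ u v (j + 3)).card : ℝ) := by
      have h := ext_count G huv.ne (j + 2) (by omega)
      have h' : ∑ T ∈ cthru G univ u v (j + 2), (extset G T).card ≤
          (j + 1) * (cthru G univ u v (j + 3)).card := by
        simpa using h
      calc (∑ T ∈ cthru G univ u v (j + 2), ((extset G T).card : ℝ))
          = ((∑ T ∈ cthru G univ u v (j + 2), (extset G T).card : ℕ) : ℝ) := by push_cast; rfl
        _ ≤ (((j + 1) * (cthru G univ u v (j + 3)).card : ℕ) : ℝ) := by exact_mod_cast h'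
        _ = ((j : ℝ) + 1) * ((cthru G univ u v (j + 3)).card : ℝ) := by push_cast; ring
    rw [Finset.prod_range_succ]
    have hjpos : (0:ℝ) < (j : ℝ) + 1 := by positivity
    calc (∏ i ∈ Finset.range j, ((N - ((i : ℝ) + 2) * b + om) / ((i : ℝ) + 1))) *
          ((N - ((j : ℝ) + 2) * b + om) / ((j : ℝ) + 1))
        ≤ ((cthru G univ u v (j + 2)).card : ℝ) * ((N - ((j : ℝ) + 2) * b + om) / ((j : ℝ) + 1)) := by
          apply mul_le_mul_of_nonneg_right ihj
          positivity
      _ ≤ ((cthru G univ u v (j + 3)).card : ℝ) := by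
          rw [← mul_div_assoc, div_le_iff₀ hjpos]
          calc ((cthru G univ u v (j + 2)).card : ℝ) * (N - ((j : ℝ) + 2) * b + om)
              ≤ ∑ T ∈ cthru G univ u v (j + 2), ((extset G T).card : ℝ) := hsumext
            _ ≤ ((j : ℝ) + 1) * ((cthru G univ u v (j + 3)).card : ℝ) := hcount
            _ = ((cthru G univ u v (j + 3)).card : ℝ) * ((j : ℝ) + 1) := by ring

/-- margin lemma for the minimum-degree hypothesis descending one level. -/
lemma inner_deg_arith (s : ℕ) (hs : 2 ≤ s) (m m' d : ℝ) (hm : 0 ≤ m)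
    (hm' : (1 - (1 / ((s : ℝ) + 1) + 1 / ((s : ℝ) + 1) ^ 4)) * m < m')
    (hd : m' - (1 / ((s : ℝ) + 1) + 1 / ((s : ℝ) + 1) ^ 4) * m ≤ d) :
    (1 - 1 / (s : ℝ) - 1 / (s : ℝ) ^ 4) * m' < d := by
  have hx : (2 : ℝ) ≤ (s : ℝ) := by exact_mod_cast hs
  set x : ℝ := (s : ℝ)
  have hx0 : (0 : ℝ) < x := by linarith
  have hx1 : (0 : ℝ) < x + 1 := by linarith
  have key : (1 / (x + 1) + 1 / (x + 1) ^ 4) ≤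
      (1 / x + 1 / x ^ 4) * (1 - (1 / (x + 1) + 1 / (x + 1) ^ 4)) := by
    rw [← sub_nonneg]
    have iden : (1 / x + 1 / x ^ 4) * (1 - (1 / (x + 1) + 1 / (x + 1) ^ 4)) -
        (1 / (x + 1) + 1 / (x + 1) ^ 4) =
        (2 * x ^ 3 + 3 * x ^ 2 + x - 1) / (x ^ 4 * (x + 1) ^ 4) := by
      field_simp
      ring
    rw [iden]
    have h1 : (0:ℝ) ≤ 2 * x ^ 3 + 3 * x ^ 2 + x - 1 := by nlinarith
    positivity
  have hcs : (0 : ℝ) < 1 / x + 1 / x ^ 4 := by positivity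
  have h2 : (1 / (x + 1) + 1 / (x + 1) ^ 4) * m ≤ (1 / x + 1 / x ^ 4) * m' := by
    calc (1 / (x + 1) + 1 / (x + 1) ^ 4) * m
        ≤ ((1 / x + 1 / x ^ 4) * (1 - (1 / (x + 1) + 1 / (x + 1) ^ 4))) * m :=
          mul_le_mul_of_nonneg_right key hm
      _ = (1 / x + 1 / x ^ 4) * ((1 - (1 / (x + 1) + 1 / (x + 1) ^ 4)) * m) := by ring
      _ ≤ (1 / x + 1 / x ^ 4) * m' :=
          mul_le_mul_of_nonneg_left (le_of_lt hm') (le_of_lt hcs)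
  nlinarith [hd, hm', h2]

/-- margin lemma for the overlap hypothesis descending one level. -/
lemma inner_ov_arith (s : ℕ) (hs : 2 ≤ s) (m m' c : ℝ) (hm : 0 ≤ m)
    (hm' : (1 - (1 / ((s : ℝ) + 1) + 1 / ((s : ℝ) + 1) ^ 4)) * m < m')
    (hc : c ≤ 2 * m / ((s : ℝ) + 1) ^ 3) : c ≤ 2 * m' / (s : ℝ) ^ 3 := by
  have hx : (2 : ℝ) ≤ (s : ℝ) := by exact_mod_cast hs
  set x : ℝ := (s : ℝ)
  have hx0 : (0 : ℝ) < x := by linarith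
  have hx1 : (0 : ℝ) < x + 1 := by linarith
  refine hc.trans ?_
  rw [div_le_div_iff₀ (by positivity) (by positivity)]
  have key : x ^ 3 ≤ (1 - (1 / (x + 1) + 1 / (x + 1) ^ 4)) * (x + 1) ^ 3 := by
    rw [← sub_nonneg]
    have iden : (1 - (1 / (x + 1) + 1 / (x + 1) ^ 4)) * (x + 1) ^ 3 - x ^ 3 =
        (2 * x ^ 2 + x - 1 / (x + 1)) := by
      field_simp
      ring
    rw [iden]
    have h2 : 1 / (x + 1) ≤ 1 := by rw [div_le_one hx1]; linarith
    nlinarith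
  have hmx : m * x ^ 3 ≤ m' * (x + 1) ^ 3 := by
    calc m * x ^ 3 ≤ m * ((1 - (1 / (x + 1) + 1 / (x + 1) ^ 4)) * (x + 1) ^ 3) :=
          mul_le_mul_of_nonneg_left key hm
      _ = ((1 - (1 / (x + 1) + 1 / (x + 1) ^ 4)) * m) * (x + 1) ^ 3 := by ring
      _ ≤ m' * (x + 1) ^ 3 :=
          mul_le_mul_of_nonneg_right (le_of_lt hm') (by positivity)
  nlinarith


lemma step_core (x m a B P Q R : ℝ) (hx : 2 ≤ x) (hm : 0 < m) (hP : 0 < P) (hQ : 0 < Q)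
    (hR : 0 < R) (hB : ((x + 1) ^ 3 * x - x + 1) / ((x + 1) ^ 3 * x) ≤ B)
    (ha : m * (x ^ 2 + x - 1) / (x + 1) ^ 2 ≤ a) :
    x * ((x + 2) * (x + 1) * (P * m) / (R * (x + 1) ^ 5)) ≤
      a * ((x + 1) * x * ((Q / R) * B * P) / (Q * x ^ 4)) := by
  have hx0 : (0:ℝ) < x := by linarith
  have hσ0 : (0:ℝ) < x + 1 := by linarith
  have hnum : (0:ℝ) < (x + 1) ^ 3 * x - x + 1 := by nlinarith
  have hB0 : (0:ℝ) < ((x + 1) ^ 3 * x - x + 1) / ((x + 1) ^ 3 * x) := by positivity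
  have hBpos : (0:ℝ) < B := lt_of_lt_of_le hB0 hB
  have hx21 : (0:ℝ) ≤ x ^ 2 + x - 1 := by nlinarith
  have hapos : (0:ℝ) ≤ a := le_trans (by positivity) ha
  have eL : x * ((x + 2) * (x + 1) * (P * m) / (R * (x + 1) ^ 5)) =
      x * (x + 2) * P * m / (R * (x + 1) ^ 4) := by
    field_simp
  have eR : a * ((x + 1) * x * ((Q / R) * B * P) / (Q * x ^ 4)) =
      a * (x + 1) * B * P / (R * x ^ 3) := by
    field_simp
  rw [eL, eR, div_le_div_iff₀ (by positivity) (by positivity)]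
  have key : x ^ 5 * (x + 2) ≤ (x ^ 2 + x - 1) * ((x + 1) ^ 3 * x - x + 1) := by
    have e : (x ^ 2 + x - 1) * ((x + 1) ^ 3 * x - x + 1) - x ^ 5 * (x + 2) =
        2 * x ^ 5 + 5 * x ^ 4 - 2 * x ^ 2 + x - 1 := by ring
    nlinarith [e]
  calc x * (x + 2) * P * m * (R * x ^ 3)
      = (P * R * m) * (x ^ 4 * (x + 2)) := by ring
    _ ≤ (P * R * m) * ((x ^ 2 + x - 1) * (((x + 1) ^ 3 * x - x + 1) / x)) := by
        apply mul_le_mul_of_nonneg_left _ (by positivity)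
        rw [← mul_div_assoc, le_div_iff₀ hx0]
        nlinarith [key]
    _ = (m * (x ^ 2 + x - 1) / (x + 1) ^ 2) *
          ((x + 1) * (((x + 1) ^ 3 * x - x + 1) / ((x + 1) ^ 3 * x)) * P) * (R * (x + 1) ^ 4) := by
        field_simp
    _ ≤ a * ((x + 1) * (((x + 1) ^ 3 * x - x + 1) / ((x + 1) ^ 3 * x)) * P) * (R * (x + 1) ^ 4) := by
        apply mul_le_mul_of_nonneg_right _ (by positivity)
        apply mul_le_mul_of_nonneg_right ha
        positivity
    _ ≤ a * ((x + 1) * B * P) * (R * (x + 1) ^ 4) := by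
        apply mul_le_mul_of_nonneg_right _ (by positivity)
        apply mul_le_mul_of_nonneg_left _ hapos
        apply mul_le_mul_of_nonneg_right _ (le_of_lt hP)
        exact mul_le_mul_of_nonneg_left hB (by linarith)
    _ = a * (x + 1) * B * P * (R * (x + 1) ^ 4) := by ring


lemma step_arith (s : ℕ) (hs : 2 ≤ s) (m a : ℝ) (hm : 0 < m)
    (ha : m - ((s : ℝ) + 2) * m / ((s : ℝ) + 1) ^ 2 ≤ a) :
    (s : ℝ) * (((s : ℝ) + 2) * ((s : ℝ) + 1) * m ^ s / ((s : ℝ) + 1) ^ (s + 4)) ≤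
      a * (((s : ℝ) + 1) * (s : ℝ) *
        ((1 - 1 / ((s : ℝ) + 1) - 1 / ((s : ℝ) + 1) ^ 4) * m) ^ (s - 1) / (s : ℝ) ^ (s + 3)) := by
  have hx : (2:ℝ) ≤ (s : ℝ) := by exact_mod_cast hs
  have hx0 : (0:ℝ) < (s:ℝ) := by linarith
  have hσ0 : (0:ℝ) < (s:ℝ) + 1 := by linarith
  set x : ℝ := (s:ℝ) with hxdef
  -- identity splitting the coefficient
  have hη0 : (0:ℝ) < 1 / (((x:ℝ) + 1) ^ 3 * x) := by positivity
  have hid : 1 - 1 / (x + 1) - 1 / (x + 1) ^ 4 =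
      (x / (x + 1)) * (1 - 1 / ((x + 1) ^ 3 * x)) := by
    field_simp
    ring
  rw [hid]
  have hpow : ((x / (x + 1)) * (1 - 1 / ((x + 1) ^ 3 * x)) * m) ^ (s - 1) =
      (x ^ (s - 1) / (x + 1) ^ (s - 1)) * (1 - 1 / ((x + 1) ^ 3 * x)) ^ (s - 1) * m ^ (s - 1) := by
    rw [mul_pow, mul_pow, div_pow]
  rw [hpow]
  have hsplit1 : m ^ s = m ^ (s - 1) * m := by
    conv_lhs => rw [show s = (s - 1) + 1 by omega]
    rw [pow_succ]
  have hsplit2 : (x : ℝ) ^ (s + 3) = x ^ (s - 1) * x ^ 4 := by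
    rw [← pow_add]
    congr 1
    omega
  have hsplit3 : ((x : ℝ) + 1) ^ (s + 4) = (x + 1) ^ (s - 1) * (x + 1) ^ 5 := by
    rw [← pow_add]
    congr 1
    omega
  rw [hsplit1, hsplit2, hsplit3]
  -- Bernoulli bound
  have hη1 : -2 ≤ -(1 / (((x:ℝ) + 1) ^ 3 * x)) := by
    have h1 : 1 / (((x:ℝ) + 1) ^ 3 * x) ≤ 1 := by
      rw [div_le_one (by positivity)]
      have h3 : (1:ℝ) ≤ (x + 1) ^ 3 := one_le_pow₀ (by linarith)
      nlinarith [h3]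
    linarith
  have hB : ((x + 1) ^ 3 * x - x + 1) / ((x + 1) ^ 3 * x) ≤
      (1 - 1 / ((x + 1) ^ 3 * x)) ^ (s - 1) := by
    have hbern := one_add_mul_le_pow hη1 (s - 1)
    have hcast : ((s - 1 : ℕ) : ℝ) = x - 1 := by
      rw [hxdef]
      have : (1:ℕ) ≤ s := by omega
      push_cast [Nat.cast_sub this]
      ring
    calc ((x + 1) ^ 3 * x - x + 1) / ((x + 1) ^ 3 * x)
        = 1 + ((s - 1 : ℕ) : ℝ) * (-(1 / ((x + 1) ^ 3 * x))) := by
          rw [hcast]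
          field_simp
          ring
      _ ≤ (1 + -(1 / ((x + 1) ^ 3 * x))) ^ (s - 1) := hbern
      _ = (1 - 1 / ((x + 1) ^ 3 * x)) ^ (s - 1) := by ring_nf
  have ha' : m * (x ^ 2 + x - 1) / (x + 1) ^ 2 ≤ a := by
    have e : m - (x + 2) * m / (x + 1) ^ 2 = m * (x ^ 2 + x - 1) / (x + 1) ^ 2 := by
      field_simp
      ring
    rw [e] at ha
    exact ha
  have := step_core x m a ((1 - 1 / ((x + 1) ^ 3 * x)) ^ (s - 1)) (m ^ (s - 1))
    (x ^ (s - 1)) ((x + 1) ^ (s - 1)) hx hm (pow_pos hm _) (pow_pos hx0 _)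
    (pow_pos hσ0 _) hB ha'
  calc x * ((x + 2) * (x + 1) * (m ^ (s - 1) * m) / ((x + 1) ^ (s - 1) * (x + 1) ^ 5))
      = x * ((x + 2) * (x + 1) * (m ^ (s - 1) * m) / ((x + 1) ^ (s - 1) * (x + 1) ^ 5)) := rfl
    _ ≤ a * ((x + 1) * x * ((x ^ (s - 1) / (x + 1) ^ (s - 1)) *
          (1 - 1 / ((x + 1) ^ 3 * x)) ^ (s - 1) * m ^ (s - 1)) / (x ^ (s - 1) * x ^ 4)) := by
        have e1 : x * ((x + 2) * (x + 1) * (m ^ (s - 1) * m) / ((x + 1) ^ (s - 1) * (x + 1) ^ 5)) =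
            x * ((x + 2) * (x + 1) * (m ^ (s - 1) * m) / ((x + 1) ^ (s - 1) * (x + 1) ^ 5)) := rfl
        convert this using 2 <;> ring
    _ = a * ((x + 1) * x * (x ^ (s - 1) / (x + 1) ^ (s - 1) *
          (1 - 1 / ((x + 1) ^ 3 * x)) ^ (s - 1) * m ^ (s - 1)) / (x ^ (s - 1) * x ^ 4)) := rfl


lemma caseI (G : SimpleGraph V) {u v : V} (huv : G.Adj u v) (r : ℕ) (hr : 2 ≤ r)
    (hn : 0 < Fintype.card V)
    (hb : ∀ w : V, ((mset G w).card : ℝ) ≤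
      (1 / (r : ℝ) + 1 / (r : ℝ) ^ 4) * (Fintype.card V : ℝ))
    (hom : 2 * (Fintype.card V : ℝ) / (r : ℝ) ^ 3 ≤ ((mset G u ∩ mset G v).card : ℝ)) :
    (Fintype.card V : ℝ) ^ (r - 1) / (r : ℝ) ^ (r + 3) <
      ((cthru G univ u v (r + 1)).card : ℝ) := by
  set N : ℝ := (Fintype.card V : ℝ) with hNdef
  have hN0 : (0:ℝ) < N := by rw [hNdef]; exact_mod_cast hn
  have hrR : (2:ℝ) ≤ (r : ℝ) := by exact_mod_cast hr
  have hr0 : (0:ℝ) < (r:ℝ) := by linarith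
  set b : ℝ := (1 / (r : ℝ) + 1 / (r : ℝ) ^ 4) * N with hbdef
  set om : ℝ := 2 * N / (r : ℝ) ^ 3 with homdef
  have hfac : ∀ i : ℕ, (i : ℝ) + 2 ≤ (r : ℝ) →
      N * (((r:ℝ) - 2 - (i:ℝ)) / (r:ℝ)) ≤ N - ((i : ℝ) + 2) * b + om := by
    intro i hi
    have e : N - ((i : ℝ) + 2) * b + om - N * (((r:ℝ) - 2 - (i:ℝ)) / (r:ℝ)) =
        N * (2 * (r:ℝ) - ((i:ℝ) + 2)) / (r:ℝ) ^ 4 := by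
      rw [hbdef, homdef]
      field_simp
      ring
    have h2 : (0:ℝ) ≤ N * (2 * (r:ℝ) - ((i:ℝ) + 2)) / (r:ℝ) ^ 4 := by
      have : (0:ℝ) ≤ 2 * (r:ℝ) - ((i:ℝ) + 2) := by linarith
      positivity
    linarith [e, h2]
  have hpos : ∀ i : ℕ, i < r - 1 → 0 ≤ N - ((i : ℝ) + 2) * b + om := by
    intro i hi
    have hir : (i : ℝ) + 2 ≤ (r : ℝ) := by
      have : i + 2 ≤ r := by omega
      exact_mod_cast this
    refine le_trans ?_ (hfac i hir)
    have h3 : (0:ℝ) ≤ (r:ℝ) - 2 - (i:ℝ) := by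
      have : i + 2 ≤ r := by omega
      have : (i:ℝ) + 2 ≤ (r:ℝ) := by exact_mod_cast this
      linarith
    positivity
  have key := chain G huv N b om rfl hb hom (r - 1) hpos (r - 1) le_rfl
  have hidx : r - 1 + 2 = r + 1 := by omega
  rw [hidx] at key
  have hsplit : r - 1 = (r - 2) + 1 := by omega
  rw [hsplit, Finset.prod_range_succ] at key
  -- bulk product bound
  have hbulk : (N / (r:ℝ)) ^ (r - 2) ≤
      ∏ i ∈ Finset.range (r - 2), ((N - ((i : ℝ) + 2) * b + om) / ((i : ℝ) + 1)) := by
    have h1 : ∏ i ∈ Finset.range (r - 2),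
        ((N / (r:ℝ)) * (((r - 2 - i : ℕ) : ℝ) / ((i + 1 : ℕ) : ℝ))) ≤
        ∏ i ∈ Finset.range (r - 2), ((N - ((i : ℝ) + 2) * b + om) / ((i : ℝ) + 1)) := by
      apply Finset.prod_le_prod
      · intro i _
        positivity
      · intro i hi
        rw [Finset.mem_range] at hi
        have h1' : i ≤ r - 2 := by omega
        have hcast : ((r - 2 - i : ℕ) : ℝ) = (r:ℝ) - 2 - (i:ℝ) := by
          push_cast [Nat.cast_sub h1', Nat.cast_sub hr]
          ring
        have hir : (i : ℝ) + 2 ≤ (r : ℝ) := by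
          have : i + 2 ≤ r := by omega
          exact_mod_cast this
        have hnum := hfac i hir
        have e : (N / (r:ℝ)) * (((r - 2 - i : ℕ) : ℝ) / ((i + 1 : ℕ) : ℝ)) =
            (N * (((r:ℝ) - 2 - (i:ℝ)) / (r:ℝ))) / ((i:ℝ) + 1) := by
          rw [hcast]
          push_cast
          ring
        rw [e]
        gcongr
    calc (N / (r:ℝ)) ^ (r - 2)
        = ∏ i ∈ Finset.range (r - 2),
            ((N / (r:ℝ)) * (((r - 2 - i : ℕ) : ℝ) / ((i + 1 : ℕ) : ℝ))) := by
          rw [Finset.prod_mul_distrib, Finset.prod_const, Finset.card_range,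
            prod_ratio_one (r - 2), mul_one]
      _ ≤ _ := h1
  -- last factor
  have hlast : (N / (r:ℝ) ^ 3) / ((r:ℝ) - 1) ≤
      (N - (((r - 2 : ℕ) : ℝ) + 2) * b + om) / (((r - 2 : ℕ) : ℝ) + 1) := by
    have hcast2 : ((r - 2 : ℕ) : ℝ) = (r:ℝ) - 2 := by
      push_cast [Nat.cast_sub hr]
      ring
    rw [hcast2]
    have e1 : N - ((r:ℝ) - 2 + 2) * b + om = N / (r:ℝ) ^ 3 := by
      rw [hbdef, homdef]
      field_simp
      ring
    have e2 : (r:ℝ) - 2 + 1 = (r:ℝ) - 1 := by ring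
    rw [e1, e2]
  -- combine
  have hcomb : (N / (r:ℝ)) ^ (r - 2) * ((N / (r:ℝ) ^ 3) / ((r:ℝ) - 1)) ≤
      ((cthru G univ u v (r + 1)).card : ℝ) := by
    refine le_trans ?_ key
    apply mul_le_mul hbulk hlast ?_ ?_
    · have hr1 : (0:ℝ) < (r:ℝ) - 1 := by linarith
      positivity
    · refine Finset.prod_nonneg (fun i hi => ?_)
      rw [Finset.mem_range] at hi
      have := hpos i (by omega)
      positivity
  refine lt_of_lt_of_le ?_ hcomb
  -- final numeric strict inequality
  have hr1 : (0:ℝ) < (r:ℝ) - 1 := by linarith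
  have e4 : (N / (r:ℝ)) ^ (r - 2) * ((N / (r:ℝ) ^ 3) / ((r:ℝ) - 1)) =
      (N ^ (r - 2) * N) / ((r:ℝ) ^ (r - 2) * ((r:ℝ) ^ 3 * ((r:ℝ) - 1))) := by
    rw [div_pow]
    field_simp
  have e5 : N ^ (r - 1) = N ^ (r - 2) * N := by
    conv_lhs => rw [show r - 1 = (r - 2) + 1 by omega]
    rw [pow_succ]
  have e6 : (r:ℝ) ^ (r + 3) = (r:ℝ) ^ (r - 2) * (r:ℝ) ^ 5 := by
    rw [← pow_add]
    congr 1
    omega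
  rw [e4, e5, e6]
  apply div_lt_div_of_pos_left
  · positivity
  · positivity
  · apply mul_lt_mul_of_pos_left _ (by positivity)
    nlinarith [pow_pos hr0 3]

/-- plumbing: the good set is large, and each good vertex is adjacent to all of `R`
except one witness vertex. -/
lemma plumbing (G : SimpleGraph V) (k : ℕ) (hk : 2 ≤ k) (A R : Finset V)
    (hov : ∀ u v : V, u ∈ A → v ∈ A → G.Adj u v →
      ((A ∩ mset G u ∩ mset G v).card : ℝ) ≤ 2 * (A.card : ℝ) / (k : ℝ) ^ 3)
    (hRA : R ⊆ A) (hR : G.IsNClique (k + 1) R) :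
    ∃ (w : V → V) (good : Finset V),
      good ⊆ A ∧
      ((A.card : ℝ) - ((k : ℝ) + 1) * (A.card : ℝ) / (k : ℝ) ^ 2 ≤ (good.card : ℝ)) ∧
      (∀ x ∈ good, w x ∈ R) ∧
      (∀ x ∈ good, ∀ u ∈ R, u ≠ w x → G.Adj u x) := by
  classical
  have hRne : R.Nonempty := by
    rw [← Finset.card_pos, hR.2]
    omega
  set miss : V → Finset V := fun x => R.filter (fun w => x ∈ mset G w) with hmiss
  refine ⟨fun x => if h : (miss x).Nonempty then h.choose else hRne.choose,
    A.filter (fun x => (miss x).card ≤ 1), Finset.filter_subset _ _, ?_, ?_, ?_⟩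
  · -- mass bound
    have hkR : (2:ℝ) ≤ (k:ℝ) := by exact_mod_cast hk
    have hk0 : (0:ℝ) < (k:ℝ) := by linarith
    set bad := A.filter (fun x => ¬ ((miss x).card ≤ 1)) with hbad
    have hsplit : (A.filter (fun x => (miss x).card ≤ 1)).card + bad.card = A.card := by
      rw [hbad]
      exact Finset.card_filter_add_card_filter_not _
    have h1 : 2 * bad.card ≤ ∑ p ∈ R.offDiag, (A ∩ mset G p.1 ∩ mset G p.2).card :=
      bad_le G A R
    have h2 : (∑ p ∈ R.offDiag, ((A ∩ mset G p.1 ∩ mset G p.2).card : ℝ)) ≤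
        (R.offDiag.card : ℝ) * (2 * (A.card : ℝ) / (k : ℝ) ^ 3) := by
      have := Finset.sum_le_card_nsmul R.offDiag
        (fun p => ((A ∩ mset G p.1 ∩ mset G p.2).card : ℝ))
        (2 * (A.card : ℝ) / (k : ℝ) ^ 3) ?_
      · simpa [nsmul_eq_mul] using this
      · intro p hp
        rw [Finset.mem_offDiag] at hp
        obtain ⟨hp1, hp2, hpne⟩ := hp
        exact hov p.1 p.2 (hRA hp1) (hRA hp2) (hR.1 hp1 hp2 hpne)
    have hcardoff : (R.offDiag.card : ℝ) = ((k : ℝ) + 1) * (k : ℝ) := by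
      rw [Finset.offDiag_card, hR.2]
      have : (k + 1) * (k + 1) - (k + 1) = (k + 1) * k := by
        cases k with
        | zero => omega
        | succ k' => ring_nf; omega
      rw [this]
      push_cast
      ring
    have h1' : 2 * (bad.card : ℝ) ≤ ∑ p ∈ R.offDiag, ((A ∩ mset G p.1 ∩ mset G p.2).card : ℝ) := by
      calc 2 * (bad.card : ℝ) = ((2 * bad.card : ℕ) : ℝ) := by push_cast; ring
        _ ≤ ((∑ p ∈ R.offDiag, (A ∩ mset G p.1 ∩ mset G p.2).card : ℕ) : ℝ) := by
            exact_mod_cast h1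
        _ = ∑ p ∈ R.offDiag, ((A ∩ mset G p.1 ∩ mset G p.2).card : ℝ) := by push_cast; rfl
    have hbadb : (bad.card : ℝ) ≤ ((k : ℝ) + 1) * (A.card : ℝ) / (k : ℝ) ^ 2 := by
      have h3 : 2 * (bad.card : ℝ) ≤ ((k : ℝ) + 1) * (k : ℝ) * (2 * (A.card : ℝ) / (k : ℝ) ^ 3) := by
        calc 2 * (bad.card : ℝ) ≤ ∑ p ∈ R.offDiag, ((A ∩ mset G p.1 ∩ mset G p.2).card : ℝ) := h1'
          _ ≤ (R.offDiag.card : ℝ) * (2 * (A.card : ℝ) / (k : ℝ) ^ 3) := h2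
          _ = ((k : ℝ) + 1) * (k : ℝ) * (2 * (A.card : ℝ) / (k : ℝ) ^ 3) := by rw [hcardoff]
        
      have e : ((k : ℝ) + 1) * (k : ℝ) * (2 * (A.card : ℝ) / (k : ℝ) ^ 3) =
          2 * (((k : ℝ) + 1) * (A.card : ℝ) / (k : ℝ) ^ 2) := by
        field_simp
      rw [e] at h3
      linarith
    have hgood : ((A.filter (fun x => (miss x).card ≤ 1)).card : ℝ) =
        (A.card : ℝ) - (bad.card : ℝ) := by
      have := hsplit
      have h4 : ((A.filter (fun x => (miss x).card ≤ 1)).card : ℝ) + (bad.card : ℝ) =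
          (A.card : ℝ) := by exact_mod_cast this
      linarith
    rw [hgood]
    linarith
  · -- witness in R
    intro x hx
    by_cases h : (miss x).Nonempty
    · simp only [dif_pos h]
      exact Finset.filter_subset _ _ h.choose_spec
    · simp only [dif_neg h]
      exact hRne.choose_spec
  · -- adjacency
    intro x hx u hu hne
    rw [Finset.mem_filter] at hx
    have hxcard := hx.2
    have hnotmiss : u ∉ miss x := by
      intro hmem
      have hne' : (miss x).Nonempty := ⟨u, hmem⟩
      simp only [dif_pos hne'] at hne
      have hchoose := hne'.choose_spec
      have : u = hne'.choose := by
        have hcard1 : (miss x).card ≤ 1 := hxcard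
        exact Finset.card_le_one.1 hcard1 u hmem _ hchoose
      exact hne this
    have : ¬ (x ∈ mset G u) := by
      intro hmem
      exact hnotmiss (Finset.mem_filter.2 ⟨hu, hmem⟩)
    rw [mem_mset, not_not] at this
    exact this

theorem psi (G : SimpleGraph V) : ∀ s : ℕ, 2 ≤ s → ∀ (A R : Finset V),
    (∀ v ∈ A, (1 - 1 / (s : ℝ) - 1 / (s : ℝ) ^ 4) * (A.card : ℝ) <
      (((A \ mset G v).card : ℕ) : ℝ)) →
    (∀ u v : V, u ∈ A → v ∈ A → G.Adj u v →
      ((A ∩ mset G u ∩ mset G v).card : ℝ) ≤ 2 * (A.card : ℝ) / (s : ℝ) ^ 3) →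
    R ⊆ A → G.IsNClique (s + 1) R →
    ((s : ℝ) + 1) * (s : ℝ) * (A.card : ℝ) ^ (s - 1) / (s : ℝ) ^ (s + 3) <
      ∑ p ∈ R.offDiag, ((cthru G A p.1 p.2 (s + 1)).card : ℝ) := by
  simp only [sdiff_mset G]
  refine Nat.le_induction ?_ ?_
  · -- base case s = 2
    intro A R hdeg hov hRA hR
    obtain ⟨w, good, hgoodA, hmass, hwR, hadj⟩ := plumbing G 2 le_rfl A R hov hRA hR
    set m : ℝ := (A.card : ℝ) with hmdef
    have hm0 : (0:ℝ) < m := by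
      rw [hmdef]
      have hRne : R.Nonempty := by rw [← Finset.card_pos, hR.2]; omega
      obtain ⟨y, hy⟩ := hRne
      exact_mod_cast Finset.card_pos.2 ⟨y, hRA hy⟩
    -- each good vertex contributes 2 to the inner sums
    have hinner : ∀ x ∈ good, (2:ℝ) ≤
        ∑ p ∈ (R.erase (w x)).offDiag,
          ((cthru G (A.filter (fun y => G.Adj x y)) p.1 p.2 2).card : ℝ) := by
      intro x hx
      have hR'card : (R.erase (w x)).card = 2 := by
        rw [Finset.card_erase_of_mem (hwR x hx), hR.2]
      have hoffcard : ((R.erase (w x)).offDiag).card = 2 := by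
        rw [Finset.offDiag_card, hR'card]
      have hone : ∀ p ∈ (R.erase (w x)).offDiag,
          (1:ℝ) ≤ ((cthru G (A.filter (fun y => G.Adj x y)) p.1 p.2 2).card : ℝ) := by
        intro p hp
        rw [Finset.mem_offDiag] at hp
        obtain ⟨hp1, hp2, hpne⟩ := hp
        have hmem : ({p.1, p.2} : Finset V) ∈
            cthru G (A.filter (fun y => G.Adj x y)) p.1 p.2 2 := by
          rw [mem_cthru]
          have hsub : ({p.1, p.2} : Finset V) ⊆ A.filter (fun y => G.Adj x y) := by
            intro z hz
            rcases Finset.mem_insert.1 hz with rfl | hz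
            · refine Finset.mem_filter.2 ⟨hRA (Finset.mem_of_mem_erase hp1), ?_⟩
              exact (hadj x hx p.1 (Finset.mem_of_mem_erase hp1)
                (Finset.ne_of_mem_erase hp1)).symm
            · rw [Finset.mem_singleton] at hz
              subst hz
              refine Finset.mem_filter.2 ⟨hRA (Finset.mem_of_mem_erase hp2), ?_⟩
              exact (hadj x hx p.2 (Finset.mem_of_mem_erase hp2)
                (Finset.ne_of_mem_erase hp2)).symm
          refine ⟨hsub, ⟨?_, ?_⟩, by simp, by simp⟩
          · intro a ha b hb hab
            simp only [Finset.coe_insert, Set.mem_insert_iff, Finset.coe_singleton,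
              Set.mem_singleton_iff] at ha hb
            have hadjp : G.Adj p.1 p.2 := hR.1 (Finset.mem_of_mem_erase hp1)
              (Finset.mem_of_mem_erase hp2) hpne
            rcases ha with rfl | rfl <;> rcases hb with rfl | rfl
            · exact absurd rfl hab
            · exact hadjp
            · exact hadjp.symm
            · exact absurd rfl hab
          · rw [Finset.card_insert_of_notMem (by simp [hpne]), Finset.card_singleton]
        have : 1 ≤ (cthru G (A.filter (fun y => G.Adj x y)) p.1 p.2 2).card :=
          Finset.one_le_card.2 ⟨_, hmem⟩
        exact_mod_cast this
      calc (2:ℝ) = ∑ _p ∈ (R.erase (w x)).offDiag, (1:ℝ) := by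
            rw [Finset.sum_const, hoffcard, nsmul_eq_mul]; norm_num
        _ ≤ _ := Finset.sum_le_sum hone
    -- swap and count
    have hswap := swap_sum good R w (fun x p =>
      ((cthru G (A.filter (fun y => G.Adj x y)) p.1 p.2 2).card : ℝ))
    have hcount : ∀ p ∈ R.offDiag,
        ∑ x ∈ good.filter (fun x => p.1 ≠ w x ∧ p.2 ≠ w x),
          ((cthru G (A.filter (fun y => G.Adj x y)) p.1 p.2 2).card : ℝ) ≤
        ((cthru G A p.1 p.2 3).card : ℝ) := by
      intro p hp
      rw [Finset.mem_offDiag] at hp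
      have h := count_le G A hp.2.2 2
        (good.filter (fun x => p.1 ≠ w x ∧ p.2 ≠ w x))
        ((Finset.filter_subset _ _).trans hgoodA)
      have h2 : (2 - 1) * (cthru G A p.1 p.2 (2 + 1)).card =
          (cthru G A p.1 p.2 3).card := by norm_num
      rw [h2] at h
      calc ∑ x ∈ good.filter (fun x => p.1 ≠ w x ∧ p.2 ≠ w x),
            ((cthru G (A.filter (fun y => G.Adj x y)) p.1 p.2 2).card : ℝ)
          = ((∑ x ∈ good.filter (fun x => p.1 ≠ w x ∧ p.2 ≠ w x),
              (cthru G (A.filter (fun y => G.Adj x y)) p.1 p.2 2).card : ℕ) : ℝ) := by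
            push_cast; rfl
        _ ≤ _ := by exact_mod_cast h
    have htotal : 2 * (good.card : ℝ) ≤
        ∑ p ∈ R.offDiag, ((cthru G A p.1 p.2 3).card : ℝ) := by
      calc 2 * (good.card : ℝ) = ∑ _x ∈ good, (2:ℝ) := by
            rw [Finset.sum_const, nsmul_eq_mul]; ring
        _ ≤ ∑ x ∈ good, ∑ p ∈ (R.erase (w x)).offDiag,
              ((cthru G (A.filter (fun y => G.Adj x y)) p.1 p.2 2).card : ℝ) :=
            Finset.sum_le_sum hinner
        _ = ∑ p ∈ R.offDiag, ∑ x ∈ good.filter (fun x => p.1 ≠ w x ∧ p.2 ≠ w x),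
              ((cthru G (A.filter (fun y => G.Adj x y)) p.1 p.2 2).card : ℝ) := hswap
        _ ≤ ∑ p ∈ R.offDiag, ((cthru G A p.1 p.2 3).card : ℝ) :=
            Finset.sum_le_sum hcount
    -- numbers
    have hgood4 : m - 3 * m / 4 ≤ (good.card : ℝ) := by
      have : ((2:ℕ):ℝ) = 2 := by norm_num
      calc m - 3 * m / 4 = m - (((2:ℕ):ℝ) + 1) * m / ((2:ℕ):ℝ) ^ 2 := by push_cast; ring
        _ ≤ (good.card : ℝ) := hmass
    have hfin : ((2:ℕ):ℝ) ^ (2 - 1 : ℕ) = m → True := fun _ => trivial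
    push_cast
    norm_num
    linarith [htotal, hgood4, hm0]
  · -- induction step
    intro s hs ih A R hdeg hov hRA hR
    have hs2 : 2 ≤ s + 1 := by omega
    obtain ⟨w, good, hgoodA, hmass, hwR, hadj⟩ := plumbing G (s + 1) hs2 A R hov hRA hR
    set m : ℝ := (A.card : ℝ) with hmdef
    have hm0 : (0:ℝ) < m := by
      rw [hmdef]
      have hRne : R.Nonempty := by rw [← Finset.card_pos, hR.2]; omega
      obtain ⟨y, hy⟩ := hRne
      exact_mod_cast Finset.card_pos.2 ⟨y, hRA hy⟩
    have hsR : (2:ℝ) ≤ (s:ℝ) := by exact_mod_cast hs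
    have hs0 : (0:ℝ) < (s:ℝ) := by linarith
    have hsig0 : (0:ℝ) < (s:ℝ) + 1 := by linarith
    have hcout : (0:ℝ) ≤ 1 - 1/((s:ℝ)+1) - 1/((s:ℝ)+1)^4 := by
      have h1 : 1/((s:ℝ)+1) ≤ 1/3 := by
        rw [div_le_div_iff₀ hsig0 (by norm_num)]
        linarith
      have h2 : 1/((s:ℝ)+1)^4 ≤ 1/3 := by
        have ha : (3:ℝ) ≤ (s:ℝ)+1 := by linarith
        have hb : (9:ℝ) ≤ ((s:ℝ)+1)^2 := by nlinarith
        have hc : (3:ℝ) ≤ ((s:ℝ)+1)^4 := by nlinarith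
        rw [div_le_div_iff₀ (by positivity) (by norm_num)]
        linarith
      linarith
    have hmass' : m - ((s:ℝ) + 2) * m / ((s:ℝ) + 1) ^ 2 ≤ (good.card : ℝ) := by
      push_cast at hmass
      calc m - ((s:ℝ)+2)*m/((s:ℝ)+1)^2 = m - (((s:ℝ)+1)+1)*m/((s:ℝ)+1)^2 := by ring
        _ ≤ _ := hmass
    have hgood0 : (0:ℝ) < (good.card : ℝ) := by
      have hkey : (0:ℝ) < m - ((s:ℝ)+2)*m/((s:ℝ)+1)^2 := by
        have e : m - ((s:ℝ)+2)*m/((s:ℝ)+1)^2 = m*((s:ℝ)^2+(s:ℝ)-1)/((s:ℝ)+1)^2 := by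
          field_simp
          ring
        rw [e]
        have h8 : (0:ℝ) < (s:ℝ)^2+(s:ℝ)-1 := by nlinarith
        positivity
      linarith
    have hgoodne : good.Nonempty := by
      rw [← Finset.card_pos]
      exact_mod_cast hgood0
    set beta : ℝ := ((s:ℝ)+1)*(s:ℝ)*((1 - 1/((s:ℝ)+1) - 1/((s:ℝ)+1)^4)*m)^(s-1)/(s:ℝ)^(s+3)
      with hbetadef
    have hinner : ∀ x ∈ good, beta <
        ∑ p ∈ (R.erase (w x)).offDiag,
          ((cthru G (A.filter (fun y => G.Adj x y)) p.1 p.2 (s+1)).card : ℝ) := by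
      intro x hx
      have hxA : x ∈ A := hgoodA hx
      set A' := A.filter (fun y => G.Adj x y) with hA'def
      set m' : ℝ := (A'.card : ℝ) with hm'def
      have hm' : (1 - 1/((s:ℝ)+1) - 1/((s:ℝ)+1)^4) * m < m' := by
        have h9 := hdeg x hxA
        push_cast at h9
        exact h9
      have hm'2 : (1 - (1/((s:ℝ)+1) + 1/((s:ℝ)+1)^4)) * m < m' := by
        calc (1 - (1/((s:ℝ)+1) + 1/((s:ℝ)+1)^4)) * m
            = (1 - 1/((s:ℝ)+1) - 1/((s:ℝ)+1)^4) * m := by ring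
          _ < m' := hm'
      have hA'A : A' ⊆ A := Finset.filter_subset _ _
      have hcardle : A'.card ≤ A.card := Finset.card_le_card hA'A
      have hdeg' : ∀ v ∈ A', (1 - 1/(s:ℝ) - 1/(s:ℝ)^4) * m' <
          ((A'.filter (fun y => G.Adj v y)).card : ℝ) := by
        intro v hv
        have hvA : v ∈ A := hA'A hv
        have hsubs : A.filter (fun y => G.Adj v y) ⊆
            (A'.filter (fun y => G.Adj v y)) ∪ (A \ A') := by
          intro y hy
          rw [Finset.mem_filter] at hy
          by_cases hyA' : y ∈ A'
          · exact Finset.mem_union_left _ (Finset.mem_filter.2 ⟨hyA', hy.2⟩)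
          · exact Finset.mem_union_right _ (Finset.mem_sdiff.2 ⟨hy.1, hyA'⟩)
        have hcards : (A.filter (fun y => G.Adj v y)).card ≤
            (A'.filter (fun y => G.Adj v y)).card + (A.card - A'.card) := by
          calc (A.filter (fun y => G.Adj v y)).card
              ≤ ((A'.filter (fun y => G.Adj v y)) ∪ (A \ A')).card :=
                Finset.card_le_card hsubs
            _ ≤ (A'.filter (fun y => G.Adj v y)).card + (A \ A').card :=
                Finset.card_union_le _ _
            _ = (A'.filter (fun y => G.Adj v y)).card + (A.card - A'.card) := by
                rw [Finset.card_sdiff_of_subset hA'A]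
        have hcardsR : ((A.filter (fun y => G.Adj v y)).card : ℝ) ≤
            ((A'.filter (fun y => G.Adj v y)).card : ℝ) + (m - m') := by
          rw [hmdef, hm'def]
          calc ((A.filter (fun y => G.Adj v y)).card : ℝ)
              ≤ (((A'.filter (fun y => G.Adj v y)).card + (A.card - A'.card) : ℕ) : ℝ) := by
                exact_mod_cast hcards
            _ = ((A'.filter (fun y => G.Adj v y)).card : ℝ) +
                ((A.card : ℝ) - (A'.card : ℝ)) := by
                push_cast [Nat.cast_sub hcardle]
                ring
        refine inner_deg_arith s hs m m' _ (le_of_lt hm0) hm'2 ?_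
        have hdv := hdeg v hvA
        push_cast at hdv
        linarith [hcardsR, hdv]
      have hov' : ∀ u' v' : V, u' ∈ A' → v' ∈ A' → G.Adj u' v' →
          ((A' ∩ mset G u' ∩ mset G v').card : ℝ) ≤ 2 * m' / (s:ℝ)^3 := by
        intro u' v' hu' hv' hadj'
        have hsub2 : A' ∩ mset G u' ∩ mset G v' ⊆ A ∩ mset G u' ∩ mset G v' := by
          intro z hz
          simp only [Finset.mem_inter] at hz ⊢
          exact ⟨⟨hA'A hz.1.1, hz.1.2⟩, hz.2⟩
        have h6 : ((A' ∩ mset G u' ∩ mset G v').card : ℝ) ≤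
            ((A ∩ mset G u' ∩ mset G v').card : ℝ) := by
          exact_mod_cast Finset.card_le_card hsub2
        have h7 := hov u' v' (hA'A hu') (hA'A hv') hadj'
        push_cast at h7
        refine inner_ov_arith s hs m m' _ (le_of_lt hm0) hm'2 ?_
        calc ((A' ∩ mset G u' ∩ mset G v').card : ℝ) ≤ _ := h6
          _ ≤ 2 * m / ((s:ℝ)+1)^3 := h7
      have hwxR := hwR x hx
      have hR'c : G.IsNClique (s + 1) (R.erase (w x)) := by
        constructor
        · exact hR.1.subset (Finset.erase_subset _ _)
        · rw [Finset.card_erase_of_mem hwxR, hR.2]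
          omega
      have hR'A' : R.erase (w x) ⊆ A' := by
        intro u hu
        refine Finset.mem_filter.2 ⟨hRA (Finset.mem_of_mem_erase hu), ?_⟩
        exact (hadj x hx u (Finset.mem_of_mem_erase hu) (Finset.ne_of_mem_erase hu)).symm
      have hihx := ih A' (R.erase (w x)) hdeg' hov' hR'A' hR'c
      refine lt_of_le_of_lt ?_ hihx
      rw [hbetadef]
      have hX0 : (0:ℝ) ≤ (1 - 1/((s:ℝ)+1) - 1/((s:ℝ)+1)^4)*m :=
        mul_nonneg hcout (le_of_lt hm0)
      have hpow : ((1 - 1/((s:ℝ)+1) - 1/((s:ℝ)+1)^4)*m)^(s-1) ≤ m'^(s-1) :=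
        pow_le_pow_left₀ hX0 (le_of_lt hm') _
      have hnum : ((s:ℝ)+1)*(s:ℝ)*((1 - 1/((s:ℝ)+1) - 1/((s:ℝ)+1)^4)*m)^(s-1) ≤
          ((s:ℝ)+1)*(s:ℝ)*m'^(s-1) := by
        apply mul_le_mul_of_nonneg_left hpow (by positivity)
      gcongr
    have hsum1 : (good.card : ℝ) * beta <
        ∑ x ∈ good, ∑ p ∈ (R.erase (w x)).offDiag,
          ((cthru G (A.filter (fun y => G.Adj x y)) p.1 p.2 (s+1)).card : ℝ) := by
      calc (good.card : ℝ) * beta = ∑ _x ∈ good, beta := by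
            rw [Finset.sum_const, nsmul_eq_mul]
        _ < _ := Finset.sum_lt_sum_of_nonempty hgoodne hinner
    have hswap := swap_sum good R w (fun x p =>
      ((cthru G (A.filter (fun y => G.Adj x y)) p.1 p.2 (s+1)).card : ℝ))
    have hcount : ∀ p ∈ R.offDiag,
        ∑ x ∈ good.filter (fun x => p.1 ≠ w x ∧ p.2 ≠ w x),
          ((cthru G (A.filter (fun y => G.Adj x y)) p.1 p.2 (s+1)).card : ℝ) ≤
        (s:ℝ) * ((cthru G A p.1 p.2 (s+2)).card : ℝ) := by
      intro p hp
      rw [Finset.mem_offDiag] at hp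
      have h := count_le G A hp.2.2 (s+1)
        (good.filter (fun x => p.1 ≠ w x ∧ p.2 ≠ w x))
        ((Finset.filter_subset _ _).trans hgoodA)
      have h2 : s + 1 - 1 = s := by omega
      rw [h2] at h
      calc ∑ x ∈ good.filter (fun x => p.1 ≠ w x ∧ p.2 ≠ w x),
            ((cthru G (A.filter (fun y => G.Adj x y)) p.1 p.2 (s+1)).card : ℝ)
          = ((∑ x ∈ good.filter (fun x => p.1 ≠ w x ∧ p.2 ≠ w x),
              (cthru G (A.filter (fun y => G.Adj x y)) p.1 p.2 (s+1)).card : ℕ) : ℝ) := by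
            push_cast
            rfl
        _ ≤ (((s * (cthru G A p.1 p.2 (s + 1 + 1)).card : ℕ)) : ℝ) := by exact_mod_cast h
        _ = (s:ℝ) * ((cthru G A p.1 p.2 (s+2)).card : ℝ) := by push_cast; ring
    have htotal : (∑ x ∈ good, ∑ p ∈ (R.erase (w x)).offDiag,
          ((cthru G (A.filter (fun y => G.Adj x y)) p.1 p.2 (s+1)).card : ℝ)) ≤
        (s:ℝ) * ∑ p ∈ R.offDiag, ((cthru G A p.1 p.2 (s+2)).card : ℝ) := by
      rw [hswap]
      calc (∑ p ∈ R.offDiag, ∑ x ∈ good.filter (fun x => p.1 ≠ w x ∧ p.2 ≠ w x),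
            ((cthru G (A.filter (fun y => G.Adj x y)) p.1 p.2 (s+1)).card : ℝ))
          ≤ ∑ p ∈ R.offDiag, (s:ℝ) * ((cthru G A p.1 p.2 (s+2)).card : ℝ) :=
            Finset.sum_le_sum hcount
        _ = (s:ℝ) * ∑ p ∈ R.offDiag, ((cthru G A p.1 p.2 (s+2)).card : ℝ) := by
            rw [Finset.mul_sum]
    have harith := step_arith s hs m (good.card : ℝ) hm0 hmass'
    have hfinal : (s:ℝ) * (((s:ℝ)+2)*((s:ℝ)+1)*m^s/((s:ℝ)+1)^(s+4)) <
        (s:ℝ) * ∑ p ∈ R.offDiag, ((cthru G A p.1 p.2 (s+2)).card : ℝ) := by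
      calc (s:ℝ) * (((s:ℝ)+2)*((s:ℝ)+1)*m^s/((s:ℝ)+1)^(s+4))
          ≤ (good.card : ℝ) * beta := harith
        _ < _ := hsum1
        _ ≤ _ := htotal
    have hres := lt_of_mul_lt_mul_left hfinal (le_of_lt hs0)
    push_cast
    rw [show ((s:ℝ)+1+1) = (s:ℝ)+2 from by ring]
    exact hres



end BNJ
open BNJ in
theorem stmt19 {n : ℕ} (r : ℕ) (hr : 2 ≤ r) (G : SimpleGraph (Fin n)) [DecidableRel G.Adj]
    (hK : ¬ G.CliqueFree (r + 1))
    (hdel : (1 - 1 / (r : ℝ) - 1 / (r : ℝ) ^ 4) * (n : ℝ) < (G.minDegree : ℝ)) :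
    ∃ u v : Fin n, G.Adj u v ∧
      (n : ℝ) ^ (r - 1) / (r : ℝ) ^ (r + 3) <
        ((Finset.univ.filter
          (fun s : Finset (Fin n) => G.IsNClique (r + 1) s ∧ u ∈ s ∧ v ∈ s)).card : ℝ) := by
  classical
  obtain ⟨R, hR⟩ : ∃ R : Finset (Fin n), G.IsNClique (r + 1) R := by
    by_contra h
    push_neg at h
    exact hK (fun t ht => h t ht)
  have hn : 0 < n := by
    have hRne : R.Nonempty := by
      rw [← Finset.card_pos, hR.2]
      omega
    obtain ⟨y, _⟩ := hRne
    exact Fin.pos y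
  have hcardV : (Fintype.card (Fin n)) = n := Fintype.card_fin n
  have hrR : (2:ℝ) ≤ (r:ℝ) := by exact_mod_cast hr
  have hr0 : (0:ℝ) < (r:ℝ) := by linarith
  -- identify the relative neighbourhoods with true neighbourhoods
  have hsdcard : ∀ v : Fin n, ((univ : Finset (Fin n)) \ mset G v).card = G.degree v := by
    intro v
    have e : ((univ : Finset (Fin n)) \ mset G v) = G.neighborFinset v := by
      ext y
      simp [mset, SimpleGraph.mem_neighborFinset]
    rw [e]
    rfl
  have hmset_card : ∀ w : Fin n, (mset G w).card + G.degree w = n := by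
    intro w
    have h1 : ((univ : Finset (Fin n)) \ mset G w).card = n - (mset G w).card := by
      rw [Finset.card_sdiff_of_subset (Finset.subset_univ _), Finset.card_univ, hcardV]
    have h2 : (mset G w).card ≤ n := by
      have := Finset.card_le_univ (mset G w)
      omega
    have h3 := hsdcard w
    omega
  have hmindeg : ∀ w : Fin n, (1 - 1 / (r : ℝ) - 1 / (r : ℝ) ^ 4) * (n : ℝ) <
      (G.degree w : ℝ) := by
    intro w
    have h1 : G.minDegree ≤ G.degree w := G.minDegree_le_degree w
    have h2 : (G.minDegree : ℝ) ≤ (G.degree w : ℝ) := by exact_mod_cast h1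
    linarith [hdel]
  have hmsetb : ∀ w : Fin n, ((mset G w).card : ℝ) ≤
      (1 / (r : ℝ) + 1 / (r : ℝ) ^ 4) * (n : ℝ) := by
    intro w
    have h := hmset_card w
    have h4 : ((mset G w).card : ℝ) + (G.degree w : ℝ) = (n:ℝ) := by exact_mod_cast h
    have h5 := hmindeg w
    nlinarith [h4, h5]
  -- identify cthru with the filter in the statement
  have hcount_eq : ∀ u v : Fin n, (cthru G univ u v (r + 1)).card =
      ((Finset.univ.filter
        (fun s : Finset (Fin n) => G.IsNClique (r + 1) s ∧ u ∈ s ∧ v ∈ s)).card) := by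
    intro u v
    congr 1
    ext t
    simp [cthru]
  by_cases hc : ∃ u v : Fin n, G.Adj u v ∧
      2 * (n : ℝ) / (r : ℝ) ^ 3 ≤ ((mset G u ∩ mset G v).card : ℝ)
  · -- Case I: a heavily-overlapping adjacent pair
    obtain ⟨u, v, huv, hom⟩ := hc
    refine ⟨u, v, huv, ?_⟩
    have h := caseI G huv r hr (by rw [hcardV]; exact hn)
      (by rw [hcardV]; exact hmsetb) (by rw [hcardV]; exact hom)
    rw [hcardV] at h
    rw [← hcount_eq u v]
    exact h
  · -- Case II: all adjacent pairs have small overlap, run the main induction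
    push_neg at hc
    have hA : (((univ : Finset (Fin n)).card : ℕ) : ℝ) = (n : ℝ) := by
      rw [Finset.card_univ, hcardV]
    have hpsi := psi G r hr univ R ?_ ?_ (Finset.subset_univ R) hR
    · by_contra hcon
      push_neg at hcon
      have hbound : ∀ p ∈ R.offDiag, ((cthru G univ p.1 p.2 (r + 1)).card : ℝ) ≤
          (n : ℝ) ^ (r - 1) / (r : ℝ) ^ (r + 3) := by
        intro p hp
        rw [Finset.mem_offDiag] at hp
        have hadj := hR.1 hp.1 hp.2.1 hp.2.2
        have h := hcon p.1 p.2 hadj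
        rw [hcount_eq p.1 p.2]
        exact h
      have hsum : (∑ p ∈ R.offDiag, ((cthru G univ p.1 p.2 (r + 1)).card : ℝ)) ≤
          (R.offDiag.card : ℝ) * ((n : ℝ) ^ (r - 1) / (r : ℝ) ^ (r + 3)) := by
        have := Finset.sum_le_card_nsmul R.offDiag _ _ hbound
        simpa [nsmul_eq_mul] using this
      have hoffcard : (R.offDiag.card : ℝ) = ((r : ℝ) + 1) * (r : ℝ) := by
        rw [Finset.offDiag_card, hR.2]
        have he : (r + 1) * (r + 1) - (r + 1) = (r + 1) * r := by
          cases r with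
          | zero => omega
          | succ r' => ring_nf; omega
        rw [he]
        push_cast
        ring
      rw [hoffcard] at hsum
      rw [hA] at hpsi
      have e : ((r : ℝ) + 1) * (r : ℝ) * ((n : ℝ) ^ (r - 1) / (r : ℝ) ^ (r + 3)) =
          ((r : ℝ) + 1) * (r : ℝ) * (n : ℝ) ^ (r - 1) / (r : ℝ) ^ (r + 3) := by
        ring
      rw [e] at hsum
      linarith [hpsi, hsum]
    · intro v _
      rw [hA]
      have h1 : (((univ \ mset G v).card : ℕ) : ℝ) = (G.degree v : ℝ) := by
        exact_mod_cast hsdcard v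
      rw [h1]
      exact hmindeg v
    · intro u v _ _ hadj
      rw [hA]
      have h := hc u v hadj
      have heq : ((univ : Finset (Fin n)) ∩ mset G u ∩ mset G v) = mset G u ∩ mset G v := by
        rw [Finset.univ_inter]
      rw [heq]
      linarith [h]
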